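/- Let (A, ∘, r) be a group with braiding arising from a skew brace (A, ∘, ·), and A ⋈ A the twisted product group on A × A. Then ι: (A, ·) → A ⋈ A, a ↦ (a, ā), is an injective group homomorphism whose image is the kernel of the homomorphism m_A: A ⋈ A → (A, ∘), (a, b) ↦ a ∘ b. -/
import Mathlib


structure SkewBrace (A : Type*) where
  circ : A → A → A
  cinv : A → A
  ce : A
  mul : A → A → A
  inv : A → A
  e : A
  circ_assoc : ∀ a b c, circ (circ a b) c = circ a (circ b c)
  ce_circ : ∀ a, circ ce a = a
  circ_ce : ∀ a, circ a ce = a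
  cinv_circ : ∀ a, circ (cinv a) a = ce
  circ_cinv : ∀ a, circ a (cinv a) = ce
  mul_assoc : ∀ a b c, mul (mul a b) c = mul a (mul b c)
  e_mul : ∀ a, mul e a = a
  mul_e : ∀ a, mul a e = a
  inv_mul : ∀ a, mul (inv a) a = e
  mul_inv : ∀ a, mul a (inv a) = e
  distrib : ∀ a b c, circ a (mul b c) = mul (mul (circ a b) (inv a)) (circ a c)

def SkewBrace.lam {A : Type*} (B : SkewBrace A) (a b : A) : A :=
  B.mul (B.inv a) (B.circ a b)

def SkewBrace.rho {A : Type*} (B : SkewBrace A) (a b : A) : A :=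
  B.mul (B.circ a b) (B.inv a)

namespace SkewBrace

variable {A : Type*} (B : SkewBrace A)

lemma mul_left_cancel {a b c : A} (h : B.mul a b = B.mul a c) : b = c := by
  have h2 := congrArg (B.mul (B.inv a)) h
  rwa [← B.mul_assoc, ← B.mul_assoc, B.inv_mul, B.e_mul, B.e_mul] at h2

lemma circ_e (a : A) : B.circ a B.e = a := by
  have h := B.distrib a B.e B.e
  rw [B.mul_e] at h
  have h2 : B.mul (B.circ a B.e) B.e
      = B.mul (B.circ a B.e) (B.mul (B.inv a) (B.circ a B.e)) := by
    rw [B.mul_e, ← B.mul_assoc]; exact h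
  have h3 := B.mul_left_cancel h2
  have h4 := congrArg (B.mul a) h3
  rw [B.mul_e, ← B.mul_assoc, B.mul_inv, B.e_mul] at h4
  exact h4.symm

lemma ce_eq : B.ce = B.e := (B.circ_e B.ce).symm.trans (B.ce_circ B.e)

lemma circ_cinv_inv (a : A) :
    B.circ a (B.inv (B.cinv a)) = B.mul a a := by
  have h := B.distrib a (B.cinv a) (B.inv (B.cinv a))
  rw [B.mul_inv, B.circ_e, B.circ_cinv, B.ce_eq, B.e_mul] at h
  have h2 := congrArg (B.mul a) h
  rw [← B.mul_assoc, B.mul_inv, B.e_mul] at h2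
  exact h2.symm

lemma circ_lam (a b : A) :
    B.circ a (B.lam (B.cinv a) b) = B.mul a b := by
  unfold lam
  rw [B.distrib, B.circ_cinv_inv, ← B.circ_assoc, B.circ_cinv, B.ce_circ,
    B.mul_assoc a a, B.mul_inv, B.mul_e]

lemma circ_eq_ce_right {a b : A} (h : B.circ a b = B.ce) : b = B.cinv a := by
  have h2 := congrArg (B.circ (B.cinv a)) h
  rwa [← B.circ_assoc, B.cinv_circ, B.ce_circ, B.circ_ce] at h2

lemma circ_cinv_cancel (a y : A) : B.circ a (B.circ (B.cinv a) y) = y := by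
  rw [← B.circ_assoc, B.circ_cinv, B.ce_circ]

end SkewBrace

/-- `ι : (A, ·) → A ⋈ A, a ↦ (a, ā)` is an injective group homomorphism
whose image is the kernel of the multiplication map `m_A : A ⋈ A → (A, ∘)`. -/
theorem iota_kernel {A : Type*} (B : SkewBrace A)
    (r : A × A → A × A)
    (hr : ∀ a b, r (a, b) =
      (B.lam a b, B.circ (B.cinv (B.lam a b)) (B.circ a b)))
    (tm : A × A → A × A → A × A)
    (htm : ∀ p q, tm p q =
      (B.circ p.1 ((r (p.2, q.1)).1), B.circ ((r (p.2, q.1)).2) q.2)) :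
    Function.Injective (fun a : A => (a, B.cinv a)) ∧
    (∀ a b, tm (a, B.cinv a) (b, B.cinv b) = (B.mul a b, B.cinv (B.mul a b))) ∧
    (∀ p : A × A, B.circ p.1 p.2 = B.ce ↔ ∃ a, p = (a, B.cinv a)) := by
  refine ⟨?_, ?_, ?_⟩
  · intro a b h
    exact congrArg Prod.fst h
  · intro a b
    rw [htm, hr]
    simp only [Prod.mk.injEq]
    refine ⟨?_, ?_⟩
    · exact B.circ_lam a b
    · refine B.circ_eq_ce_right ?_
      rw [← B.circ_lam a b]
      simp only [B.circ_assoc, B.circ_cinv_cancel, B.circ_cinv, B.circ_ce]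
  · intro p
    constructor
    · intro h
      exact ⟨p.1, Prod.ext rfl (B.circ_eq_ce_right h)⟩
    · rintro ⟨a, rfl⟩
      exact B.circ_cinv a
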